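/- Let g be a holomorphic polynomial on the bidisk, homogeneous of some degree d ≥ 1, with ‖g‖∞ ≤ 1 on T², and set h = (1−g)/(1−\bar{g}) on T². Then P⁺₂h = 1 − ‖g‖₂² − g, and ‖P⁺₂h‖₄⁴ = 1 + ‖g‖₂⁸ + ‖g‖₄⁴ − 2‖g‖₂⁴. -/

import Mathlib

open MeasureTheory Real Filter
open scoped ENNReal Topology

/-- Normalized Haar measure on the `n`-torus `𝕋ⁿ`. -/
noncomputable def muN (n : ℕ) : Measure (Fin n → AddCircle (1:ℝ)) :=
  Measure.pi fun _ => AddCircle.haarAddCircle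

/-- The Fourier coefficient of `f : 𝕋ⁿ → ℂ` at the multi-index `α ∈ ℤⁿ`. -/
noncomputable def fourierCoeffN {n : ℕ} (f : (Fin n → AddCircle (1:ℝ)) → ℂ)
    (α : Fin n → ℤ) : ℂ :=
  ∫ z, (∏ i, fourier (-(α i)) (z i)) * f z ∂muN n

/-- `g` is the Riesz projection `P⁺ₙ f` of `f` on the `n`-torus: the Fourier coefficients of
`g` agree with those of `f` for multi-indices with all components nonnegative, and vanish
for all other multi-indices. -/
def IsRieszN {n : ℕ} (f g : (Fin n → AddCircle (1:ℝ)) → ℂ) : Prop :=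
  MemLp f 2 (muN n) ∧ MemLp g 2 (muN n) ∧
    (∀ α : Fin n → ℤ, (∀ i, 0 ≤ α i) → fourierCoeffN g α = fourierCoeffN f α) ∧
    (∀ α : Fin n → ℤ, (∃ i, α i < 0) → fourierCoeffN g α = 0)

/-- The critical exponent `pₙ = sup {p ≥ 2 : ‖P⁺ₙ‖_{∞,p} = 1}` of the Riesz projection
on the `n`-torus. -/
noncomputable def critExpN (n : ℕ) : ℝ :=
  sSup {p : ℝ | 2 ≤ p ∧ ∀ f g : (Fin n → AddCircle (1:ℝ)) → ℂ, IsRieszN f g →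
    eLpNorm g (ENNReal.ofReal p) (muN n) ≤ eLpNorm f ∞ (muN n)}

namespace RieszHelper

abbrev T2 := Fin 2 → AddCircle (1:ℝ)

instance : IsProbabilityMeasure (muN 2) := by unfold muN; infer_instance
instance : (muN 2).IsAddLeftInvariant := by unfold muN; infer_instance

lemma rot_eq_zero (f : T2 → ℂ) (c : T2) (w : ℂ)
    (hsc : ∀ z, f (z + c) = w * f z) (hw : w ≠ 1) : ∫ z, f z ∂muN 2 = 0 := by
  have h1 : ∫ z, f (z + c) ∂muN 2 = ∫ z, f z ∂muN 2 := integral_add_right_eq_self f c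
  simp only [hsc, integral_const_mul] at h1
  by_contra h0
  exact hw (mul_right_cancel₀ h0 (by rw [h1, one_mul]))

lemma fourier_neg_one (m : ℤ) (hm : m ≠ 0) :
    (fourier m ((((1:ℝ)/2/(m:ℝ) : ℝ)) : AddCircle (1:ℝ)) : ℂ) = -1 := by
  have := @fourier_add_half_inv_index (1:ℝ) m hm (one_pos : (0:ℝ) < 1) (0 : AddCircle (1:ℝ))
  simpa using this

lemma int_zero_of_scale (f : T2 → ℂ) (m : ℤ) (hm : m ≠ 0)
    (hsc : ∀ (t : AddCircle (1:ℝ)) (z : T2), f (z + fun _ => t) = fourier m t * f z) :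
    ∫ z, f z ∂muN 2 = 0 := by
  set t : AddCircle (1:ℝ) := (((1:ℝ)/2/(m:ℝ) : ℝ) : AddCircle (1:ℝ))
  refine rot_eq_zero f (fun _ => t) (fourier m t) (hsc t) ?_
  rw [fourier_neg_one m hm]; norm_num

lemma int_zero_of_scale_single (f : T2 → ℂ) (i : Fin 2) (m : ℤ) (hm : m ≠ 0)
    (hsc : ∀ (t : AddCircle (1:ℝ)) (z : T2), f (z + Pi.single i t) = fourier m t * f z) :
    ∫ z, f z ∂muN 2 = 0 := by
  set t : AddCircle (1:ℝ) := (((1:ℝ)/2/(m:ℝ) : ℝ) : AddCircle (1:ℝ))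
  refine rot_eq_zero f (Pi.single i t) (fourier m t) (hsc t) ?_
  rw [fourier_neg_one m hm]; norm_num

lemma toCircle_pow (x : AddCircle (1:ℝ)) (k : ℕ) :
    (AddCircle.toCircle x : ℂ) ^ k = fourier (k : ℤ) x := by
  induction k with
  | zero => simp [fourier_zero]
  | succ n ih =>
      rw [pow_succ, ih, ← fourier_one (x := x), ← fourier_add]
      norm_num

lemma fourier_add_arg (n : ℤ) (x y : AddCircle (1:ℝ)) :
    (fourier n (x + y) : ℂ) = fourier n x * fourier n y := by
  simp only [fourier_apply, smul_add, AddCircle.toCircle_add, Circle.coe_mul]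

lemma fourier_pow_idx (m : ℤ) (j : ℕ) (x : AddCircle (1:ℝ)) :
    (fourier m x : ℂ) ^ j = fourier (m * j) x := by
  induction j with
  | zero => simp [fourier_zero]
  | succ n ih =>
      rw [pow_succ, ih, ← fourier_add]
      congr 1; push_cast; ring

lemma norm_fourier_apply (n : ℤ) (x : AddCircle (1:ℝ)) : ‖(fourier n x : ℂ)‖ = 1 := by
  rw [fourier_apply]; exact Circle.norm_coe _

lemma integrable_bdd {f : T2 → ℂ} (hf : AEStronglyMeasurable f (muN 2)) (C : ℝ)
    (hb : ∀ z, ‖f z‖ ≤ C) : Integrable f (muN 2) :=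
  Integrable.mono' (integrable_const C) hf (Eventually.of_forall hb)

/-- The character `z ↦ ∏ i, fourier (-(α i)) (z i)`. -/
noncomputable def E (α : Fin 2 → ℤ) (z : T2) : ℂ := ∏ i, fourier (-(α i)) (z i)

lemma fourierCoeffN_eq (f : T2 → ℂ) (α : Fin 2 → ℤ) :
    fourierCoeffN f α = ∫ z, E α z * f z ∂muN 2 := rfl

lemma E_apply (α : Fin 2 → ℤ) (z : T2) :
    E α z = fourier (-(α 0)) (z 0) * fourier (-(α 1)) (z 1) := by
  simp [E, Fin.prod_univ_two]

lemma E_add (α : Fin 2 → ℤ) (c : T2) (z : T2) :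
    E α (z + c) = (fourier (-(α 0)) (c 0) * fourier (-(α 1)) (c 1)) * E α z := by
  simp only [E_apply]
  have h0 : (z + c) 0 = z 0 + c 0 := rfl
  have h1 : (z + c) 1 = z 1 + c 1 := rfl
  rw [h0, h1, fourier_add_arg, fourier_add_arg]; ring

lemma norm_E (α : Fin 2 → ℤ) (z : T2) : ‖E α z‖ = 1 := by
  rw [E_apply, norm_mul, norm_fourier_apply, norm_fourier_apply, mul_one]

lemma E_continuous (α : Fin 2 → ℤ) : Continuous (E α) := by
  have : E α = fun z => fourier (-(α 0)) (z 0) * fourier (-(α 1)) (z 1) := funext (E_apply α)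
  rw [this]
  exact ((fourier _).continuous.comp
      (continuous_apply (0 : Fin 2) : Continuous fun z : T2 => z 0)).mul
    ((fourier _).continuous.comp (continuous_apply (1 : Fin 2) : Continuous fun z : T2 => z 1))

lemma E_zero' (z : T2) : E 0 z = 1 := by
  rw [E_apply]; simp

lemma E_one_int : ∫ z, E (0 : Fin 2 → ℤ) z ∂muN 2 = 1 := by
  simp only [E_zero']; simp

lemma E_single (α : Fin 2 → ℤ) (i : Fin 2) (t : AddCircle (1:ℝ)) (z : T2) :
    E α (z + Pi.single i t) = fourier (-(α i)) t * E α z := by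
  rw [E_add]
  congr 1
  fin_cases i <;>
    simp [Pi.single_apply, Fin.isValue, fourier_eval_zero, mul_comm]

lemma E_int_zero (α : Fin 2 → ℤ) (hα : α ≠ 0) : ∫ z, E α z ∂muN 2 = 0 := by
  have hex : ∃ i, α i ≠ 0 := by
    by_contra hc
    push_neg at hc
    exact hα (funext hc)
  obtain ⟨i, hi⟩ := hex
  exact int_zero_of_scale_single (E α) i (-(α i)) (by omega) (fun t z => E_single α i t z)

lemma E_mono_int_zero (α : Fin 2 → ℤ) (k l : ℕ) (i : Fin 2) (hi : α i < 0) :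
    ∫ z, E α z * fourier (k : ℤ) (z 0) * fourier (l : ℤ) (z 1) ∂muN 2 = 0 := by
  fin_cases i
  · have hi0 : α 0 < 0 := hi
    refine int_zero_of_scale_single _ 0 (-(α 0) + k) (by omega) ?_
    intro t z
    have hz0 : (z + Pi.single (0 : Fin 2) t : T2) 0 = z 0 + t := by
      simp [Pi.single_apply]
    have hz1 : (z + Pi.single (0 : Fin 2) t : T2) 1 = z 1 := by
      simp [Pi.single_apply]
    calc E α (z + Pi.single (0 : Fin 2) t)
          * fourier (k : ℤ) ((z + Pi.single (0 : Fin 2) t : T2) 0)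
          * fourier (l : ℤ) ((z + Pi.single (0 : Fin 2) t : T2) 1)
        = (fourier (-(α 0)) t * E α z) * (fourier (k : ℤ) (z 0) * fourier (k : ℤ) t)
            * fourier (l : ℤ) (z 1) := by
          rw [E_single, hz0, hz1, fourier_add_arg]
      _ = (fourier (-(α 0)) t * fourier (k : ℤ) t)
            * (E α z * fourier (k : ℤ) (z 0) * fourier (l : ℤ) (z 1)) := by ring
      _ = fourier (-(α 0) + k) t
            * (E α z * fourier (k : ℤ) (z 0) * fourier (l : ℤ) (z 1)) := by
          rw [← fourier_add]
  · have hi1 : α 1 < 0 := hi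
    refine int_zero_of_scale_single _ 1 (-(α 1) + l) (by omega) ?_
    intro t z
    have hz0 : (z + Pi.single (1 : Fin 2) t : T2) 0 = z 0 := by
      simp [Pi.single_apply]
    have hz1 : (z + Pi.single (1 : Fin 2) t : T2) 1 = z 1 + t := by
      simp [Pi.single_apply]
    calc E α (z + Pi.single (1 : Fin 2) t)
          * fourier (k : ℤ) ((z + Pi.single (1 : Fin 2) t : T2) 0)
          * fourier (l : ℤ) ((z + Pi.single (1 : Fin 2) t : T2) 1)
        = (fourier (-(α 1)) t * E α z) * fourier (k : ℤ) (z 0)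
            * (fourier (l : ℤ) (z 1) * fourier (l : ℤ) t) := by
          rw [E_single, hz0, hz1, fourier_add_arg]
      _ = (fourier (-(α 1)) t * fourier (l : ℤ) t)
            * (E α z * fourier (k : ℤ) (z 0) * fourier (l : ℤ) (z 1)) := by ring
      _ = fourier (-(α 1) + l) t
            * (E α z * fourier (k : ℤ) (z 0) * fourier (l : ℤ) (z 1)) := by
          rw [← fourier_add]

section G
variable {g : T2 → ℂ}

lemma g_scale_of_poly {d : ℕ} (c : ℕ → ℂ)
    (hg : ∀ z, g z = ∑ k ∈ Finset.range (d + 1),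
      c k * (AddCircle.toCircle (z 0) : ℂ) ^ k * (AddCircle.toCircle (z 1) : ℂ) ^ (d - k))
    (t : AddCircle (1:ℝ)) (z : T2) : g (z + fun _ => t) = fourier (d:ℤ) t * g z := by
  rw [hg, hg, Finset.mul_sum]
  refine Finset.sum_congr rfl ?_
  intro k hk
  have hkd : k ≤ d := Nat.lt_succ_iff.mp (Finset.mem_range.mp hk)
  have h0 : ((z + fun _ => t : T2) 0) = z 0 + t := rfl
  have h1 : ((z + fun _ => t : T2) 1) = z 1 + t := rfl
  rw [h0, h1, AddCircle.toCircle_add, AddCircle.toCircle_add, Circle.coe_mul, Circle.coe_mul,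
    mul_pow, mul_pow, ← toCircle_pow]
  rw [show (AddCircle.toCircle t : ℂ) ^ d
      = (AddCircle.toCircle t : ℂ) ^ k * (AddCircle.toCircle t : ℂ) ^ (d - k) by
    rw [← pow_add]; congr 1; omega]
  ring

lemma keyE' {d : ℕ}
    (hgs : ∀ (t : AddCircle (1:ℝ)) (z : T2), g (z + fun _ => t) = fourier (d:ℤ) t * g z)
    (α : Fin 2 → ℤ) (j k : ℕ)
    (hm : -(α 0) + -(α 1) + (d:ℤ)*j - (d:ℤ)*k ≠ 0) :
    ∫ z, E α z * g z ^ j * (starRingEnd ℂ) (g z) ^ k ∂muN 2 = 0 := by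
  refine int_zero_of_scale _ (-(α 0) + -(α 1) + (d:ℤ)*j - (d:ℤ)*k) hm ?_
  intro t z
  calc E α (z + fun _ => t) * g (z + fun _ => t) ^ j
        * (starRingEnd ℂ) (g (z + fun _ => t)) ^ k
      = (fourier (-(α 0)) t * fourier (-(α 1)) t * fourier ((d:ℤ)*j) t
          * fourier ((-(d:ℤ))*k) t) * (E α z * g z ^ j * (starRingEnd ℂ) (g z) ^ k) := by
        rw [E_add, hgs, mul_pow, fourier_pow_idx, map_mul, mul_pow,
          ← fourier_neg, fourier_pow_idx]
        ring
    _ = fourier (-(α 0) + -(α 1) + (d:ℤ)*j - (d:ℤ)*k) t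
          * (E α z * g z ^ j * (starRingEnd ℂ) (g z) ^ k) := by
        rw [← fourier_add, ← fourier_add, ← fourier_add]
        congr 2
        ring

lemma keyM {d : ℕ} (hd : 1 ≤ d)
    (hgs : ∀ (t : AddCircle (1:ℝ)) (z : T2), g (z + fun _ => t) = fourier (d:ℤ) t * g z)
    (j k : ℕ) (hjk : j ≠ k) :
    ∫ z, g z ^ j * (starRingEnd ℂ) (g z) ^ k ∂muN 2 = 0 := by
  have hcond : -((0 : Fin 2 → ℤ) 0) + -((0 : Fin 2 → ℤ) 1) + (d:ℤ)*j - (d:ℤ)*k ≠ 0 := by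
    simp only [Pi.zero_apply, neg_zero, zero_add]
    intro hcon
    have hd0 : (d:ℤ) ≠ 0 := by positivity
    have : (j:ℤ) = (k:ℤ) := mul_left_cancel₀ hd0 (by linarith)
    exact hjk (by exact_mod_cast this)
  have h := keyE' hgs 0 j k hcond
  rw [show (fun z => E 0 z * g z ^ j * (starRingEnd ℂ) (g z) ^ k)
      = fun z => g z ^ j * (starRingEnd ℂ) (g z) ^ k from
    funext fun z => by rw [E_zero', one_mul]] at h
  exact h

lemma cont_Egjqk (hgc : Continuous g) (α : Fin 2 → ℤ) (j k : ℕ) :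
    Continuous fun z => E α z * g z ^ j * (starRingEnd ℂ) (g z) ^ k :=
  ((E_continuous α).mul (hgc.pow j)).mul ((Complex.continuous_conj.comp hgc).pow k)

lemma integrable_Egjqk (hgc : Continuous g) (hsup : ∀ z, ‖g z‖ ≤ 1) (α : Fin 2 → ℤ)
    (j k : ℕ) : Integrable (fun z => E α z * g z ^ j * (starRingEnd ℂ) (g z) ^ k) (muN 2) := by
  refine integrable_bdd (cont_Egjqk hgc α j k).aestronglyMeasurable 1 ?_
  intro z
  rw [norm_mul, norm_mul, norm_E, one_mul, norm_pow, norm_pow, RCLike.norm_conj]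
  have h1 : ‖g z‖ ^ j * ‖g z‖ ^ k ≤ 1 ^ j * 1 ^ k := by
    gcongr <;> first | exact norm_nonneg _ | exact hsup z
  simpa using h1

lemma integrable_gjqk (hgc : Continuous g) (hsup : ∀ z, ‖g z‖ ≤ 1)
    (j k : ℕ) : Integrable (fun z => g z ^ j * (starRingEnd ℂ) (g z) ^ k) (muN 2) := by
  have h := integrable_Egjqk hgc hsup 0 j k
  rw [show (fun z => E 0 z * g z ^ j * (starRingEnd ℂ) (g z) ^ k)
      = fun z => g z ^ j * (starRingEnd ℂ) (g z) ^ k from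
    funext fun z => by rw [E_zero', one_mul]] at h
  exact h

lemma stepA (hgc : Continuous g) (hsup : ∀ z, ‖g z‖ ≤ 1) {d : ℕ} (hd : 1 ≤ d)
    (hgs : ∀ (t : AddCircle (1:ℝ)) (z : T2), g (z + fun _ => t) = fourier (d:ℤ) t * g z)
    (α : Fin 2 → ℤ) (hα : ∀ i, 0 ≤ α i) (r : ℝ) (hr0 : 0 ≤ r) (hr1 : r < 1) :
    ∫ z, E α z * (1 - g z) * (1 - (r:ℂ) * (starRingEnd ℂ) (g z))⁻¹ ∂muN 2
      = (∫ z, E α z * (1 - g z) ∂muN 2)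
        - (r:ℂ) * (if α = 0 then ∫ z, g z * (starRingEnd ℂ) (g z) ∂muN 2 else 0) := by
  classical
  set q : T2 → ℂ := fun z => (starRingEnd ℂ) (g z) with hq
  set F : ℕ → T2 → ℂ := fun k z => E α z * (1 - g z) * ((r:ℂ) * q z) ^ k with hF
  have hqn : ∀ z, ‖q z‖ = ‖g z‖ := fun z => RCLike.norm_conj _
  have hrn : ‖(r:ℂ)‖ = r := by rw [Complex.norm_real]; exact Real.norm_of_nonneg hr0
  have h1g : ∀ z, ‖1 - g z‖ ≤ 2 := by
    intro z
    calc ‖1 - g z‖ ≤ ‖(1:ℂ)‖ + ‖g z‖ := norm_sub_le _ _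
      _ ≤ 1 + 1 := by rw [norm_one]; exact add_le_add_right (hsup z) 1
      _ = 2 := by norm_num
  have hnorm : ∀ k z, ‖F k z‖ ≤ 2 * r ^ k := by
    intro k z
    rw [hF]; simp only
    rw [norm_mul, norm_mul, norm_E, one_mul, norm_pow, norm_mul, hrn, hqn]
    have hb : r * ‖g z‖ ≤ r := by
      calc r * ‖g z‖ ≤ r * 1 := by gcongr; exact hsup z
        _ = r := mul_one r
    have hb0 : 0 ≤ r * ‖g z‖ := mul_nonneg hr0 (norm_nonneg _)
    exact mul_le_mul (h1g z) (pow_le_pow_left₀ hb0 hb k) (pow_nonneg hb0 k) (by norm_num)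
  have hFcont : ∀ k, Continuous (F k) := by
    intro k
    exact ((E_continuous α).mul (continuous_const.sub hgc)).mul
      ((continuous_const.mul (Complex.continuous_conj.comp hgc)).pow k)
  have hFi : ∀ k, Integrable (F k) (muN 2) := fun k =>
    integrable_bdd (hFcont k).aestronglyMeasurable (2 * r ^ k) (hnorm k)
  have hsumnorm : Summable fun k => ∫ z, ‖F k z‖ ∂muN 2 := by
    refine Summable.of_nonneg_of_le (fun k => integral_nonneg fun z => norm_nonneg _)
      (fun k => ?_) (Summable.mul_left 2 (summable_geometric_of_lt_one hr0 hr1))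
    calc ∫ z, ‖F k z‖ ∂muN 2 ≤ ∫ _z, 2 * r ^ k ∂muN 2 :=
          integral_mono (hFi k).norm (integrable_const _) (hnorm k)
      _ = 2 * r ^ k := by simp
  have hpt : (fun z => E α z * (1 - g z) * (1 - (r:ℂ) * q z)⁻¹) = fun z => ∑' k, F k z := by
    funext z
    have hlt : ‖(r:ℂ) * q z‖ < 1 := by
      rw [norm_mul, hrn, hqn]
      calc r * ‖g z‖ ≤ r * 1 := by gcongr; exact hsup z
        _ = r := mul_one r
        _ < 1 := hr1
    rw [hF]; simp only
    rw [tsum_mul_left, tsum_geometric_of_norm_lt_one hlt]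
  rw [hpt, ← integral_tsum_of_summable_integral_norm hFi hsumnorm]
  have hsplit : ∀ k, ∫ z, F k z ∂muN 2
      = (r:ℂ)^k * ((∫ z, E α z * g z ^ 0 * q z ^ k ∂muN 2)
        - ∫ z, E α z * g z ^ 1 * q z ^ k ∂muN 2) := by
    intro k
    rw [← integral_sub (integrable_Egjqk hgc hsup α 0 k) (integrable_Egjqk hgc hsup α 1 k),
      ← integral_const_mul]
    congr 1; funext z; rw [hF]; simp only; rw [mul_pow]; ring
  have hd' : (1:ℤ) ≤ (d:ℤ) := by exact_mod_cast hd
  have hα0 : (0:ℤ) ≤ α 0 := hα 0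
  have hα1 : (0:ℤ) ≤ α 1 := hα 1
  have hvanish : ∀ k ∉ ({0, 1} : Finset ℕ), ∫ z, F k z ∂muN 2 = 0 := by
    intro k hk
    have hk2 : 2 ≤ k := by
      simp only [Finset.mem_insert, Finset.mem_singleton] at hk; omega
    have hk2' : (2:ℤ) ≤ (k:ℤ) := by exact_mod_cast hk2
    rw [hsplit k,
      keyE' hgs α 0 k (by push_cast; nlinarith),
      keyE' hgs α 1 k (by push_cast; nlinarith)]
    ring
  rw [tsum_eq_sum hvanish]
  have h01 : ({0,1} : Finset ℕ) = insert 0 {1} := rfl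
  rw [h01, Finset.sum_insert (by norm_num), Finset.sum_singleton]
  have hF0 : ∫ z, F 0 z ∂muN 2 = ∫ z, E α z * (1 - g z) ∂muN 2 := by
    congr 1; funext z; rw [hF]; simp
  have hEq0 : ∫ z, E α z * g z ^ 0 * q z ^ 1 ∂muN 2 = 0 :=
    keyE' hgs α 0 1 (by push_cast; nlinarith)
  have hEgq : ∫ z, E α z * g z ^ 1 * q z ^ 1 ∂muN 2
      = (if α = 0 then ∫ z, g z * (starRingEnd ℂ) (g z) ∂muN 2 else 0) := by
    by_cases hα0' : α = 0
    · rw [if_pos hα0', hα0']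
      congr 1; funext z; rw [E_zero']; simp [hq]
    · rw [if_neg hα0']
      have hs : α 0 + α 1 ≠ 0 := by
        intro hcon
        apply hα0'
        have h0 : α 0 = 0 := by omega
        have h1 : α 1 = 0 := by omega
        funext i
        fin_cases i <;> simp [h0, h1]
      exact keyE' hgs α 1 1 (by push_cast; omega)
  rw [hF0, hsplit 1, hEq0, hEgq]
  simp only [pow_one]
  ring

lemma coeff_h (hgc : Continuous g) (hsup : ∀ z, ‖g z‖ ≤ 1) {d : ℕ} (hd : 1 ≤ d)
    (hgs : ∀ (t : AddCircle (1:ℝ)) (z : T2), g (z + fun _ => t) = fourier (d:ℤ) t * g z)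
    (α : Fin 2 → ℤ) (hα : ∀ i, 0 ≤ α i) :
    ∫ z, E α z * ((1 - g z) / (1 - (starRingEnd ℂ) (g z))) ∂muN 2
      = (∫ z, E α z * (1 - g z) ∂muN 2)
        - (if α = 0 then ∫ z, g z * (starRingEnd ℂ) (g z) ∂muN 2 else 0) := by
  classical
  set r : ℕ → ℝ := fun n => 1 - (1/2 : ℝ)^(n+1) with hrdef
  have hrhalf : ∀ n : ℕ, 0 < (1/2 : ℝ)^(n+1) ∧ (1/2 : ℝ)^(n+1) ≤ 1 := by
    intro n
    constructor
    · positivity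
    · exact pow_le_one₀ (by norm_num) (by norm_num)
  have hr0 : ∀ n, 0 ≤ r n := fun n => by
    have := (hrhalf n).2; simp only [hrdef]; linarith
  have hr1 : ∀ n, r n < 1 := fun n => by
    have := (hrhalf n).1; simp only [hrdef]; linarith
  have hrt : Tendsto r atTop (𝓝 1) := by
    have h2 : Tendsto (fun n : ℕ => (1/2 : ℝ)^(n+1)) atTop (𝓝 0) := by
      have base : Tendsto (fun n : ℕ => (1/2 : ℝ)^n) atTop (𝓝 0) :=
        tendsto_pow_atTop_nhds_zero_of_lt_one (by norm_num) (by norm_num)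
      have : (fun n : ℕ => (1/2 : ℝ)^(n+1)) = fun n => (1/2) * (1/2 : ℝ)^n := by
        funext n; rw [pow_succ]; ring
      rw [this]
      simpa using base.const_mul (1/2 : ℝ)
    have := h2.const_sub 1
    rw [sub_zero] at this
    exact this
  set Fn : ℕ → T2 → ℂ :=
    fun n z => E α z * (1 - g z) * (1 - ((r n : ℝ) : ℂ) * (starRingEnd ℂ) (g z))⁻¹ with hFn
  -- boundedness
  have hden : ∀ (s : ℝ) (z : T2), 0 ≤ s → s < 1 →
      1 - s ≤ ‖1 - (s:ℂ) * (starRingEnd ℂ) (g z)‖ := by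
    intro s z hs0 hs1
    have h1 : ‖(s:ℂ) * (starRingEnd ℂ) (g z)‖ = s * ‖g z‖ := by
      rw [norm_mul, RCLike.norm_conj, Complex.norm_real, Real.norm_of_nonneg hs0]
    have h2 : ‖(1:ℂ)‖ - ‖(s:ℂ) * (starRingEnd ℂ) (g z)‖
        ≤ ‖1 - (s:ℂ) * (starRingEnd ℂ) (g z)‖ := norm_sub_norm_le _ _
    rw [norm_one, h1] at h2
    have h3 : s * ‖g z‖ ≤ s := by
      calc s * ‖g z‖ ≤ s * 1 := by gcongr; exact hsup z
        _ = s := mul_one s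
    linarith
  have hbound : ∀ (s : ℝ) (z : T2), 0 ≤ s → s < 1 →
      ‖E α z * (1 - g z) * (1 - (s:ℂ) * (starRingEnd ℂ) (g z))⁻¹‖ ≤ 2 := by
    intro s z hs0 hs1
    set w : ℂ := 1 - (s:ℂ) * (starRingEnd ℂ) (g z) with hw
    have hwpos : 0 < ‖w‖ := lt_of_lt_of_le (by linarith) (hden s z hs0 hs1)
    have hnum : ‖1 - g z‖ ≤ 2 * ‖w‖ := by
      have e1 : ‖1 - g z‖ = ‖1 - (starRingEnd ℂ) (g z)‖ := by
        rw [show (1 : ℂ) - (starRingEnd ℂ) (g z) = (starRingEnd ℂ) (1 - g z) by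
          rw [map_sub, map_one], RCLike.norm_conj]
      have e2 : (1:ℂ) - (starRingEnd ℂ) (g z)
          = w + ((s:ℂ) - 1) * ((starRingEnd ℂ) (g z)) - 0 := by rw [hw]; ring
      have e3 : ‖(1:ℂ) - (starRingEnd ℂ) (g z)‖
          ≤ ‖w‖ + ‖((s:ℂ) - 1) * ((starRingEnd ℂ) (g z))‖ := by
        rw [e2, sub_zero]; exact norm_add_le _ _
      have e4 : ‖((s:ℂ) - 1) * ((starRingEnd ℂ) (g z))‖ ≤ 1 - s := by
        rw [norm_mul, RCLike.norm_conj]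
        have : ‖(s:ℂ) - 1‖ = 1 - s := by
          rw [show (s:ℂ) - 1 = ((s - 1 : ℝ) : ℂ) by push_cast; ring, Complex.norm_real,
            Real.norm_of_nonpos (by linarith)]
          linarith [abs_of_nonpos (show s - 1 ≤ 0 by linarith)]
        calc ‖(s:ℂ) - 1‖ * ‖g z‖ ≤ ‖(s:ℂ) - 1‖ * 1 := by gcongr; exact hsup z
          _ = 1 - s := by rw [mul_one, this]
      have e5 : 1 - s ≤ ‖w‖ := hden s z hs0 hs1
      rw [e1]; linarith
    rw [norm_mul, norm_mul, norm_E, one_mul, norm_inv]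
    rw [mul_inv_le_iff₀ hwpos]
    linarith
  have hFnm : ∀ n, AEStronglyMeasurable (Fn n) (muN 2) := by
    intro n
    apply Measurable.aestronglyMeasurable
    exact ((((E_continuous α).measurable).mul
      ((measurable_const.sub hgc.measurable))).mul
      ((measurable_const.sub
        (measurable_const.mul ((Complex.continuous_conj.comp hgc).measurable))).inv))
  have hblim : ∀ n, ∀ᵐ z ∂(muN 2), ‖Fn n z‖ ≤ (fun _ : T2 => (2:ℝ)) z :=
    fun n => Eventually.of_forall fun z => hbound (r n) z (hr0 n) (hr1 n)
  have hptlim : ∀ᵐ z ∂(muN 2), Tendsto (fun n => Fn n z) atTop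
      (𝓝 (E α z * ((1 - g z) / (1 - (starRingEnd ℂ) (g z))))) := by
    refine Eventually.of_forall fun z => ?_
    by_cases hz : (starRingEnd ℂ) (g z) = 1
    · have hgz : g z = 1 := by
        have := congrArg (starRingEnd ℂ) hz
        simpa using this
      have : ∀ n, Fn n z = 0 := by
        intro n; simp [hFn, hgz]
      rw [show (fun n => Fn n z) = fun _ => (0:ℂ) from funext this]
      have : E α z * ((1 - g z) / (1 - (starRingEnd ℂ) (g z))) = 0 := by
        rw [hgz]; simp
      rw [this]
      exact tendsto_const_nhds
    · have hne : (1:ℂ) - (starRingEnd ℂ) (g z) ≠ 0 := by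
        intro hcon
        apply hz
        have := sub_eq_zero.mp hcon
        exact this.symm
      have hcr : Tendsto (fun n => ((r n : ℝ) : ℂ)) atTop (𝓝 1) := by
        have := (Complex.continuous_ofReal.tendsto 1).comp hrt
        simpa [Function.comp_def] using this
      have hden' : Tendsto (fun n => 1 - ((r n : ℝ) : ℂ) * (starRingEnd ℂ) (g z)) atTop
          (𝓝 (1 - (starRingEnd ℂ) (g z))) := by
        have := (hcr.mul_const ((starRingEnd ℂ) (g z))).const_sub 1
        simpa using this
      have hinv : Tendsto (fun n => (1 - ((r n : ℝ) : ℂ) * (starRingEnd ℂ) (g z))⁻¹) atTop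
          (𝓝 ((1 - (starRingEnd ℂ) (g z))⁻¹)) := hden'.inv₀ hne
      have := hinv.const_mul (E α z * (1 - g z))
      rw [div_eq_mul_inv, ← mul_assoc]
      exact this
  have hlim : Tendsto (fun n => ∫ z, Fn n z ∂muN 2) atTop
      (𝓝 (∫ z, E α z * ((1 - g z) / (1 - (starRingEnd ℂ) (g z))) ∂muN 2)) :=
    tendsto_integral_of_dominated_convergence _ hFnm (integrable_const 2) hblim hptlim
  have heval : ∀ n, ∫ z, Fn n z ∂muN 2
      = (∫ z, E α z * (1 - g z) ∂muN 2)
        - ((r n : ℝ) : ℂ) * (if α = 0 then ∫ z, g z * (starRingEnd ℂ) (g z) ∂muN 2 else 0) :=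
    fun n => stepA hgc hsup hd hgs α hα (r n) (hr0 n) (hr1 n)
  have hlim2 : Tendsto (fun n => ∫ z, Fn n z ∂muN 2) atTop
      (𝓝 ((∫ z, E α z * (1 - g z) ∂muN 2)
        - (if α = 0 then ∫ z, g z * (starRingEnd ℂ) (g z) ∂muN 2 else 0))) := by
    rw [show (fun n => ∫ z, Fn n z ∂muN 2) = fun n =>
      (∫ z, E α z * (1 - g z) ∂muN 2)
        - ((r n : ℝ) : ℂ) * (if α = 0 then ∫ z, g z * (starRingEnd ℂ) (g z) ∂muN 2 else 0)
      from funext heval]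
    have hcr : Tendsto (fun n => ((r n : ℝ) : ℂ)) atTop (𝓝 1) := by
      have := (Complex.continuous_ofReal.tendsto 1).comp hrt
      simpa [Function.comp_def] using this
    have hI0 : Tendsto (fun _ : ℕ => ∫ z, E α z * (1 - g z) ∂muN 2) atTop
        (𝓝 (∫ z, E α z * (1 - g z) ∂muN 2)) := tendsto_const_nhds
    have := hI0.sub
      (hcr.mul_const (if α = 0 then ∫ z, g z * (starRingEnd ℂ) (g z) ∂muN 2 else 0))
    simpa using this
  exact tendsto_nhds_unique hlim hlim2

end G
end RieszHelper


open RieszHelper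

/-- Let `g` be a holomorphic polynomial on the bidisk, homogeneous of degree `d ≥ 1`
(with coefficients `c 0, ..., c d`), with `‖g‖_∞ ≤ 1` on `𝕋²`, and let
`h = (1-g)/(1-conj g)`. Then `P⁺₂h = 1 - ‖g‖₂² - g` and
`‖P⁺₂h‖₄⁴ = 1 + ‖g‖₂⁸ + ‖g‖₄⁴ - 2‖g‖₂⁴`. -/
theorem riesz_of_homogeneous_quotient (d : ℕ) (hd : 1 ≤ d) (c : ℕ → ℂ)
    (g : (Fin 2 → AddCircle (1:ℝ)) → ℂ)
    (hg : ∀ z, g z = ∑ k ∈ Finset.range (d + 1),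
      c k * (AddCircle.toCircle (z 0) : ℂ) ^ k * (AddCircle.toCircle (z 1) : ℂ) ^ (d - k))
    (hsup : ∀ z, ‖g z‖ ≤ 1)
    (h : (Fin 2 → AddCircle (1:ℝ)) → ℂ)
    (hh : ∀ z, h z = (1 - g z) / (1 - starRingEnd ℂ (g z))) :
    IsRieszN h (fun z => 1 - ((∫ w, ‖g w‖ ^ 2 ∂muN 2 : ℝ) : ℂ) - g z) ∧
    (eLpNorm (fun z => 1 - ((∫ w, ‖g w‖ ^ 2 ∂muN 2 : ℝ) : ℂ) - g z) 4 (muN 2)).toReal ^ 4 =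
      1 + (∫ w, ‖g w‖ ^ 2 ∂muN 2) ^ 4 + (∫ w, ‖g w‖ ^ 4 ∂muN 2)
        - 2 * (∫ w, ‖g w‖ ^ 2 ∂muN 2) ^ 2 := by
  classical
  set a : ℝ := ∫ w, ‖g w‖ ^ 2 ∂muN 2 with ha
  set b : ℝ := ∫ w, ‖g w‖ ^ 4 ∂muN 2 with hb
  set G : T2 → ℂ := fun z => 1 - (a : ℂ) - g z with hG
  have hgc : Continuous g := by
    rw [show g = fun z => ∑ k ∈ Finset.range (d + 1),
      c k * (AddCircle.toCircle (z 0) : ℂ) ^ k * (AddCircle.toCircle (z 1) : ℂ) ^ (d - k)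
      from funext hg]
    refine continuous_finset_sum _ fun k _ => ?_
    have h0 : Continuous fun z : T2 => (AddCircle.toCircle (z 0) : ℂ) :=
      continuous_induced_dom.comp (AddCircle.continuous_toCircle.comp
        (continuous_apply (0 : Fin 2) : Continuous fun z : T2 => z 0))
    have h1 : Continuous fun z : T2 => (AddCircle.toCircle (z 1) : ℂ) :=
      continuous_induced_dom.comp (AddCircle.continuous_toCircle.comp
        (continuous_apply (1 : Fin 2) : Continuous fun z : T2 => z 1))
    exact (continuous_const.mul (h0.pow k)).mul (h1.pow (d - k))
  have hgs : ∀ (t : AddCircle (1:ℝ)) (z : T2), g (z + fun _ => t) = fourier (d:ℤ) t * g z :=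
    g_scale_of_poly c hg
  -- pointwise conjugation identities
  have hpt2 : ∀ z : T2, g z * (starRingEnd ℂ) (g z) = ((‖g z‖ ^ 2 : ℝ) : ℂ) := by
    intro z
    rw [Complex.mul_conj, Complex.normSq_eq_norm_sq]
  have hgq : ∫ z, g z * (starRingEnd ℂ) (g z) ∂muN 2 = (a : ℂ) := by
    have h2 : ∫ z, ((‖g z‖ ^ 2 : ℝ) : ℂ) ∂muN 2
        = ((∫ z, ‖g z‖ ^ 2 ∂muN 2 : ℝ) : ℂ) := integral_ofReal
    simp only [hpt2]
    rw [h2, ha]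
  have hpt4 : ∀ z : T2, g z ^ 2 * (starRingEnd ℂ) (g z) ^ 2 = ((‖g z‖ ^ 4 : ℝ) : ℂ) := by
    intro z
    rw [← mul_pow, hpt2 z, ← Complex.ofReal_pow, ← pow_mul]
  have hgq2 : ∫ z, g z ^ 2 * (starRingEnd ℂ) (g z) ^ 2 ∂muN 2 = (b : ℂ) := by
    have h2 : ∫ z, ((‖g z‖ ^ 4 : ℝ) : ℂ) ∂muN 2
        = ((∫ z, ‖g z‖ ^ 4 ∂muN 2 : ℝ) : ℂ) := integral_ofReal
    simp only [hpt4]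
    rw [h2, hb]
  -- integrability facts
  have hintE : ∀ α, Integrable (E α) (muN 2) := fun α =>
    integrable_bdd (E_continuous α).aestronglyMeasurable 1
      (fun z => le_of_eq (norm_E α z))
  have hintEg : ∀ α, Integrable (fun z => E α z * g z) (muN 2) := by
    intro α
    have h' := integrable_Egjqk hgc hsup α 1 0
    simpa using h'
  -- ∫ E
  have hEint : ∀ α : Fin 2 → ℤ, ∫ z, E α z ∂muN 2 = if α = 0 then 1 else 0 := by
    intro α
    by_cases hα : α = 0
    · rw [if_pos hα, hα]; exact E_one_int
    · rw [if_neg hα]; exact E_int_zero α hα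
  -- ∫ E g for α with a negative component
  have hEg_neg : ∀ α : Fin 2 → ℤ, (∃ i, α i < 0) → ∫ z, E α z * g z ∂muN 2 = 0 := by
    rintro α ⟨i, hi⟩
    have hfun : (fun z => E α z * g z)
        = fun z => ∑ k ∈ Finset.range (d + 1),
            c k * (E α z * fourier (k : ℤ) (z 0) * fourier (((d - k : ℕ)) : ℤ) (z 1)) := by
      funext z
      rw [hg z, Finset.mul_sum]
      refine Finset.sum_congr rfl fun k _ => ?_
      rw [← toCircle_pow, ← toCircle_pow]
      ring
    rw [hfun, integral_finset_sum]
    · refine Finset.sum_eq_zero fun k _ => ?_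
      rw [integral_const_mul, E_mono_int_zero α k (d - k) i hi, mul_zero]
    · intro k _
      refine (integrable_bdd ?_ 1 ?_).const_mul (c k)
      · exact (((E_continuous α).mul
          ((fourier _).continuous.comp
            (continuous_apply (0 : Fin 2) : Continuous fun z : T2 => z 0))).mul
          ((fourier _).continuous.comp
            (continuous_apply (1 : Fin 2) : Continuous fun z : T2 => z 1))).aestronglyMeasurable
      · intro z
        rw [norm_mul, norm_mul, norm_E, norm_fourier_apply, norm_fourier_apply]
        norm_num
  -- linear split of the coefficient of G
  have hsplitG : ∀ α : Fin 2 → ℤ, ∫ z, E α z * G z ∂muN 2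
      = (1 - (a : ℂ)) * (∫ z, E α z ∂muN 2) - ∫ z, E α z * g z ∂muN 2 := by
    intro α
    rw [← integral_const_mul, ← integral_sub ((hintE α).const_mul _) (hintEg α)]
    congr 1; funext z; simp only [hG]; ring
  have hcoeff_pos : ∀ α : Fin 2 → ℤ, (∀ i, 0 ≤ α i) →
      fourierCoeffN G α = fourierCoeffN h α := by
    intro α hα
    rw [fourierCoeffN_eq, fourierCoeffN_eq]
    rw [show (fun z => E α z * h z)
        = fun z => E α z * ((1 - g z) / (1 - (starRingEnd ℂ) (g z))) from
      funext fun z => by rw [hh z]]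
    rw [coeff_h hgc hsup hd hgs α hα, hgq]
    have h1g : ∫ z, E α z * (1 - g z) ∂muN 2
        = (∫ z, E α z ∂muN 2) - ∫ z, E α z * g z ∂muN 2 := by
      rw [← integral_sub (hintE α) (hintEg α)]; congr 1; funext z; ring
    rw [hsplitG α, h1g, hEint α]
    by_cases hα0 : α = 0
    · simp only [hα0, if_pos]; ring
    · simp only [if_neg hα0]; ring
  have hcoeff_neg : ∀ α : Fin 2 → ℤ, (∃ i, α i < 0) → fourierCoeffN G α = 0 := by
    intro α hexi
    rw [fourierCoeffN_eq, hsplitG α, hEint α, hEg_neg α hexi]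
    have hα0 : α ≠ 0 := by
      obtain ⟨i, hi⟩ := hexi
      intro hcon; rw [hcon] at hi; simp at hi
    rw [if_neg hα0]; ring
  -- Memℒp facts
  have hmemh : MemLp h 2 (muN 2) := by
    have hmeas : AEStronglyMeasurable h (muN 2) := by
      rw [show h = fun z => (1 - g z) / (1 - (starRingEnd ℂ) (g z)) from funext hh]
      exact ((measurable_const.sub hgc.measurable).div
        (measurable_const.sub
          ((Complex.continuous_conj.comp hgc).measurable))).aestronglyMeasurable
    refine MemLp.of_bound hmeas 1 (Eventually.of_forall fun z => ?_)
    rw [hh z, norm_div]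
    rw [show ‖(1:ℂ) - (starRingEnd ℂ) (g z)‖ = ‖1 - g z‖ by
      rw [show (1:ℂ) - (starRingEnd ℂ) (g z) = (starRingEnd ℂ) (1 - g z) by
        rw [map_sub, map_one], RCLike.norm_conj]]
    exact div_self_le_one _
  have hGcont : Continuous G := by rw [hG]; exact continuous_const.sub hgc
  have hGbd : ∀ z, ‖G z‖ ≤ ‖(1:ℂ) - (a:ℂ)‖ + 1 := by
    intro z
    simp only [hG]
    calc ‖1 - (a:ℂ) - g z‖ ≤ ‖1 - (a:ℂ)‖ + ‖g z‖ := norm_sub_le _ _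
      _ ≤ ‖1 - (a:ℂ)‖ + 1 := by linarith [hsup z]
  have hmemG : MemLp G 2 (muN 2) :=
    MemLp.of_bound hGcont.aestronglyMeasurable _ (Eventually.of_forall hGbd)
  have hmemG4 : MemLp G 4 (muN 2) :=
    MemLp.of_bound hGcont.aestronglyMeasurable _ (Eventually.of_forall hGbd)
  refine ⟨⟨hmemh, hmemG, hcoeff_pos, hcoeff_neg⟩, ?_⟩
  -- Part 2 : the L⁴ norm computation
  have hsn := hmemG4.eLpNorm_eq_integral_rpow_norm (by norm_num) (by norm_num)
  have htr : ((4 : ℝ≥0∞)).toReal = (4 : ℝ) := by norm_num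
  rw [htr] at hsn
  have hXY : (∫ z, ‖G z‖ ^ (4:ℝ) ∂muN 2) = ∫ z, ‖G z‖ ^ (4:ℕ) ∂muN 2 := by
    congr 1
    funext z
    rw [show (4:ℝ) = ((4:ℕ) : ℝ) by norm_num, Real.rpow_natCast]
  rw [hXY] at hsn
  set Y : ℝ := ∫ z, ‖G z‖ ^ (4:ℕ) ∂muN 2 with hYdef
  have hY0 : (0:ℝ) ≤ Y := by
    rw [hYdef]; exact integral_nonneg fun z => by positivity
  rw [hsn, ENNReal.toReal_ofReal (Real.rpow_nonneg hY0 _)]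
  have hpow : ((Y ^ ((4:ℝ))⁻¹) ^ (4:ℕ) : ℝ) = Y := by
    rw [← Real.rpow_natCast (Y ^ ((4:ℝ))⁻¹) 4, ← Real.rpow_mul hY0]
    norm_num
  rw [hpow]
  -- compute Y via complex moments
  set A : ℂ := 1 - (a:ℂ) with hA
  set T : ℕ → ℕ → T2 → ℂ := fun j k z => g z ^ j * (starRingEnd ℂ) (g z) ^ k with hT
  have hTi : ∀ j k, Integrable (T j k) (muN 2) := fun j k => integrable_gjqk hgc hsup j k
  have hT00 : ∫ z, T 0 0 z ∂muN 2 = 1 := by simp [hT]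
  have hTjk : ∀ j k, j ≠ k → ∫ z, T j k z ∂muN 2 = 0 := fun j k hjk => keyM hd hgs j k hjk
  have hT11 : ∫ z, T 1 1 z ∂muN 2 = (a:ℂ) := by
    simp only [hT, pow_one]; exact hgq
  have hT22 : ∫ z, T 2 2 z ∂muN 2 = (b:ℂ) := by
    simp only [hT]; exact hgq2
  have hexp : (fun z => ((‖G z‖ ^ (4:ℕ) : ℝ) : ℂ)) = fun z =>
      ∑ n : Fin 9, (![A^4, -2*A^3, -2*A^3, A^2, A^2, 4*A^2, -2*A, -2*A, 1] n)
        * T (![0,1,0,2,0,1,2,1,2] n) (![0,0,1,0,2,1,1,2,2] n) z := by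
    funext z
    have h1 : ((‖G z‖ ^ (4:ℕ) : ℝ) : ℂ) = (G z * (starRingEnd ℂ) (G z))^2 := by
      rw [Complex.mul_conj, Complex.normSq_eq_norm_sq]
      push_cast; ring
    have h2 : (starRingEnd ℂ) (G z) = A - (starRingEnd ℂ) (g z) := by
      simp only [hG, hA, map_sub, map_one, Complex.conj_ofReal]
    have h3 : G z = A - g z := by simp only [hG, hA]
    rw [h1, h2, h3]
    simp only [hT, Fin.sum_univ_succ, Finset.univ_eq_empty, Finset.sum_empty,
      Fin.sum_univ_zero, Matrix.cons_val_zero, Matrix.cons_val_succ]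
    ring
  have hYint : ((Y:ℝ) : ℂ) = A^4 + 4*A^2*(a:ℂ) + (b:ℂ) := by
    have h2 : ∫ z, ((‖G z‖ ^ (4:ℕ) : ℝ) : ℂ) ∂muN 2
        = ((∫ z, ‖G z‖ ^ (4:ℕ) ∂muN 2 : ℝ) : ℂ) := integral_ofReal
    rw [hYdef, ← h2, hexp]
    rw [integral_finset_sum _ (fun n _ => (hTi _ _).const_mul _)]
    simp only [Fin.sum_univ_succ, Finset.univ_eq_empty, Finset.sum_empty, Fin.sum_univ_zero,
      Matrix.cons_val_zero, Matrix.cons_val_succ, integral_const_mul]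
    rw [hT00, hT11, hT22, hTjk 1 0 (by norm_num), hTjk 0 1 (by norm_num),
      hTjk 2 0 (by norm_num), hTjk 0 2 (by norm_num), hTjk 2 1 (by norm_num),
      hTjk 1 2 (by norm_num)]
    ring
  have hYreal : Y = (1-a)^4 + 4*(1-a)^2*a + b := by
    have hcast : ((Y:ℝ) : ℂ) = (((1-a)^4 + 4*(1-a)^2*a + b : ℝ) : ℂ) := by
      rw [hYint, hA]; push_cast; ring
    exact_mod_cast hcast
  rw [hYreal]; ring
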